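/- Let L be an algebraic lattice whose join-semilattice of compact elements is dually pseudo-complemented. The following are equivalent: (i) a = (a + c) ⊓ (a + c*) for every a ∈ L and compact c; (ii) every meet-irreducible a ≠ 1 is a coatom (i.e., [a,1] = {a,1}); (iii) every completely meet-irreducible a is a coatom. -/

import Mathlib

open CompleteLattice

lemma my_bot_compact {L : Type*} [CompleteLattice L] : IsCompactElement (⊥ : L) := by
  intro s _
  exact fun hne _ _ _ => let ⟨x, hx⟩ := hne; ⟨x, hx, bot_le⟩

lemma my_sup_compact {L : Type*} [CompleteLattice L] {a b : L}
    (ha : IsCompactElement a) (hb : IsCompactElement b) : IsCompactElement (a ⊔ b) := by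
  rw [isCompactElement_iff_le_of_directed_sSup_le] at ha hb ⊢
  intro s hne hdir hle
  obtain ⟨x, hxs, hax⟩ := ha s hne hdir (le_trans le_sup_left hle)
  obtain ⟨y, hys, hby⟩ := hb s hne hdir (le_trans le_sup_right hle)
  obtain ⟨z, hzs, hxz, hyz⟩ := hdir x hxs y hys
  exact ⟨z, hzs, sup_le (hax.trans hxz) (hby.trans hyz)⟩

/-- If `m ⊔ c = ⊤` with `c` compact and `⊤` compact, then in a compactly generated
lattice there is a compact `b ≤ m` with `c ⊔ b = ⊤`. -/
lemma my_exists_compact_compl {L : Type*} [CompleteLattice L] [IsCompactlyGenerated L]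
    {m c : L} (htop : IsCompactElement (⊤ : L)) (hmc : m ⊔ c = ⊤) :
    ∃ b : L, IsCompactElement b ∧ b ≤ m ∧ c ⊔ b = ⊤ := by
  have hm : sSup {b : L | IsCompactElement b ∧ b ≤ m} = m := sSup_compact_le_eq m
  have hle : (⊤ : L) ≤ sSup ((fun b => b ⊔ c) '' {b : L | IsCompactElement b ∧ b ≤ m}) := by
    have hne : ({b : L | IsCompactElement b ∧ b ≤ m}).Nonempty :=
      ⟨⊥, my_bot_compact, bot_le⟩
    rw [sSup_image]
    calc (⊤ : L) = m ⊔ c := hmc.symm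
    _ = sSup {b : L | IsCompactElement b ∧ b ≤ m} ⊔ c := by rw [hm]
    _ = ⨆ b ∈ {b : L | IsCompactElement b ∧ b ≤ m}, (b ⊔ c) := by
        rw [sSup_eq_iSup, biSup_sup]
        exact hne
    _ ≤ ⨆ a ∈ {b : L | IsCompactElement b ∧ b ≤ m}, (a ⊔ c) := le_rfl
  have hdir : DirectedOn (· ≤ ·) ((fun b => b ⊔ c) '' {b : L | IsCompactElement b ∧ b ≤ m}) := by
    rintro - ⟨x, ⟨hxc, hxm⟩, rfl⟩ - ⟨y, ⟨hyc, hym⟩, rfl⟩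
    exact ⟨(x ⊔ y) ⊔ c, ⟨x ⊔ y, ⟨my_sup_compact hxc hyc, sup_le hxm hym⟩, rfl⟩,
      sup_le_sup_right le_sup_left c, sup_le_sup_right le_sup_right c⟩
  have hne : ((fun b => b ⊔ c) '' {b : L | IsCompactElement b ∧ b ≤ m}).Nonempty :=
    ⟨⊥ ⊔ c, ⟨⊥, ⟨my_bot_compact, bot_le⟩, rfl⟩⟩
  rw [isCompactElement_iff_le_of_directed_sSup_le] at htop
  obtain ⟨-, ⟨b, ⟨hbc, hbm⟩, rfl⟩, hb⟩ := htop _ hne hdir hle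
  exact ⟨b, hbc, hbm, le_antisymm le_top (hb.trans (le_of_eq (sup_comm b c)))⟩

/-- Equivalence of the three conditions characterizing the EML on algebraic lattices. -/
theorem stmt_11 (L : Type*) [CompleteLattice L] [IsCompactlyGenerated L]
    (star : L → L)
    (hstar_cpt : ∀ c : L, IsCompactElement c → IsCompactElement (star c))
    (hjoin : ∀ c : L, IsCompactElement c → c ⊔ star c = ⊤)
    (hleast : ∀ c b : L, IsCompactElement c → IsCompactElement b → c ⊔ b = ⊤ → star c ≤ b) :
    List.TFAE
      [∀ a c : L, IsCompactElement c → (a ⊔ c) ⊓ (a ⊔ star c) = a,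
       ∀ a : L, a ≠ ⊤ → (∀ x y : L, a = x ⊓ y → a = x ∨ a = y) →
          ∀ x : L, a ≤ x → x = a ∨ x = ⊤,
       ∀ a : L, (∀ X : Set L, a = sInf X → a ∈ X) →
          ∀ x : L, a ≤ x → x = a ∨ x = ⊤] := by
  have htop : IsCompactElement (⊤ : L) := by
    have := hjoin ⊥ my_bot_compact
    rw [bot_sup_eq] at this
    exact this ▸ hstar_cpt ⊥ my_bot_compact
  -- key fact: if m ⊔ c = ⊤ for compact c, then star c ≤ m
  have hkey : ∀ m c : L, IsCompactElement c → m ⊔ c = ⊤ → star c ≤ m := by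
    intro m c hc hmc
    obtain ⟨b, hbc, hbm, hcb⟩ := my_exists_compact_compl htop hmc
    exact (hleast c b hc hbc hcb).trans hbm
  tfae_have 1 → 2 := by
    intro h1 a _ hmi x hax
    by_cases hxa : x = a
    · exact Or.inl hxa
    · right
      -- find a compact c ≤ x with ¬ c ≤ a
      have hxna : ¬ x ≤ a := fun h => hxa (le_antisymm h hax)
      have : ¬ ∀ c ∈ {c : L | IsCompactElement c ∧ c ≤ x}, c ≤ a := by
        intro hall
        exact hxna (by rw [← sSup_compact_le_eq x]; exact sSup_le hall)
      push_neg at this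
      obtain ⟨c, ⟨hc, hcx⟩, hca⟩ := this
      have := hmi (a ⊔ c) (a ⊔ star c) (h1 a c hc).symm
      rcases this with h | h
      · exact absurd (le_sup_right.trans h.symm.le) hca
      · -- star c ≤ a, so ⊤ = c ⊔ star c ≤ x
        have hsca : star c ≤ a := le_sup_right.trans h.symm.le
        have : (⊤ : L) ≤ x := by
          rw [← hjoin c hc]
          exact sup_le hcx (hsca.trans hax)
        exact le_antisymm le_top this |>.symm ▸ le_antisymm le_top this |>.symm ▸ (top_le_iff.mp this)
  tfae_have 2 → 3 := by
    intro h2 a ha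
    have hne : a ≠ ⊤ := by
      intro h
      have := ha ∅ (by rw [sInf_empty, h])
      exact this
    refine h2 a hne ?_
    intro x y hxy
    have := ha {x, y} (by rw [sInf_pair]; exact hxy)
    rcases this with h | h
    · exact Or.inl h
    · exact Or.inr h
  tfae_have 3 → 1 := by
    intro h3 a c hc
    refine le_antisymm ?_ (le_inf le_sup_left le_sup_left)
    by_contra hba
    set b := (a ⊔ c) ⊓ (a ⊔ star c) with hb
    -- there is a compact d ≤ b with ¬ d ≤ a
    have : ¬ ∀ d ∈ {d : L | IsCompactElement d ∧ d ≤ b}, d ≤ a := by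
      intro hall
      exact hba (by rw [← sSup_compact_le_eq b]; exact sSup_le hall)
    push_neg at this
    obtain ⟨d, ⟨hd, hdb⟩, hda⟩ := this
    -- Zorn: maximal m with a ≤ m and ¬ d ≤ m
    obtain ⟨m, ham, hm⟩ := zorn_le_nonempty₀ {m : L | a ≤ m ∧ ¬ d ≤ m}
      (by
        intro ch hch hchain y hy
        refine ⟨sSup ch, ⟨le_trans (hch hy).1 (le_sSup hy), ?_⟩, fun z hz => le_sSup hz⟩
        intro hdch
        rw [isCompactElement_iff_le_of_directed_sSup_le] at hd
        obtain ⟨z, hzch, hdz⟩ := hd ch ⟨y, hy⟩ hchain.directedOn hdch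
        exact (hch hzch).2 hdz)
      a ⟨le_rfl, hda⟩
    obtain ⟨⟨ham', hdm⟩, hmax⟩ := hm
    -- m is completely meet-irreducible
    have hcmi : ∀ X : Set L, m = sInf X → m ∈ X := by
      intro X hX
      by_contra hmX
      have : d ≤ sInf X := by
        refine le_sInf fun x hxX => ?_
        have hmx : m ≤ x := hX ▸ sInf_le hxX
        by_contra hdx
        have := hmax (y := x) ⟨ham'.trans hmx, hdx⟩ hmx
        exact hmX (le_antisymm hmx this ▸ hxX)
      rw [← hX] at this
      exact hdm this
    -- apply (3)
    have hcoatom := h3 m hcmi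
    have hmt : m ≠ ⊤ := fun h => hdm (h ▸ le_top)
    -- m ⊔ c is m or ⊤
    rcases hcoatom (m ⊔ c) le_sup_left with h | h
    · -- c ≤ m, so d ≤ a ⊔ c ≤ m
      have : d ≤ m := hdb.trans (inf_le_left.trans (sup_le ham' (le_sup_right.trans h.le)))
      exact hdm this
    · -- m ⊔ c = ⊤, so star c ≤ m
      have hscm : star c ≤ m := hkey m c hc h
      have : d ≤ m := hdb.trans (inf_le_right.trans (sup_le ham' hscm))
      exact hdm this
  tfae_finish
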